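/- Let L : ℂ² → ℂ² be a linear mapping and let M > 1 be a positive integer. Then L has a periodic point of exact period M if and only if one of the following holds: (a) one eigenvalue of L is a primitive M-th root of unity; (b) the two eigenvalues of L are primitive m₁-th and m₂-th roots of unity, respectively, with lcm(m₁,m₂) = M. -/

import Mathlib

open Metric Set Filter Topology Polynomial Asymptotics
open scoped Classical

noncomputable section

namespace ZhangPaper

/-- `ℂⁿ`. -/
abbrev Cn (n : ℕ) := Fin n → ℂ

variable {n : ℕ}

/-- A germ in `𝒪(ℂⁿ,0,0)`: holomorphic near `0` and fixing the origin. -/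
def IsGerm (f : Cn n → Cn n) : Prop := AnalyticAt ℂ f 0 ∧ f 0 = 0

/-- `q` is a regular value of `h` on `s`. -/
def IsRegularValueOn (h : Cn n → Cn n) (s : Set (Cn n)) (q : Cn n) : Prop :=
  ∀ x ∈ s, h x = q → Function.Bijective (fderiv ℂ h x)

/-- `m` is the zero order (multiplicity) of `h` at the isolated zero `p`:
the number of solutions of `h x = q` near `p`, for any regular value `q`
with `‖q‖` sufficiently small. -/
def HasZeroOrder (h : Cn n → Cn n) (p : Cn n) (m : ℕ) : Prop :=
  ∃ r > 0, AnalyticOnNhd ℂ h (closedBall p r) ∧ h p = 0 ∧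
    (∀ x ∈ closedBall p r, h x = 0 → x = p) ∧
    (∀ ε > 0, ∃ q : Cn n, ‖q‖ < ε ∧ IsRegularValueOn h (ball p r) q) ∧
    ∃ δ > 0, ∀ q : Cn n, ‖q‖ < δ → IsRegularValueOn h (ball p r) q →
      {x ∈ ball p r | h x = q}.ncard = m

/-- The zero order `π_h(p)` of `h` at `p`. -/
def zeroOrder (h : Cn n → Cn n) (p : Cn n) : ℕ := sInf {m | HasZeroOrder h p m}

/-- The fixed point index `μ_g(p)` of `g` at `p`. -/
def fixedPointIndex (g : Cn n → Cn n) (p : Cn n) : ℕ :=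
  zeroOrder (fun x => x - g x) p

/-- The local Dold index `P_M(f,0)`. -/
def doldIndex (f : Cn n → Cn n) (M : ℕ) : ℤ :=
  ∑ τ ∈ M.primeFactors.powerset,
    (-1 : ℤ) ^ τ.card * (fixedPointIndex (f^[M / (∏ p ∈ τ, p)]) 0 : ℤ)

/-- `x` is a periodic point of exact period `M` for `g`. -/
def ExactPeriodicPt (g : Cn n → Cn n) (M : ℕ) (x : Cn n) : Prop :=
  g^[M] x = x ∧ ∀ j, 0 < j → j < M → g^[j] x ≠ x

/-- `g` has at least `m` distinct periodic orbits of period `M` inside `B`. -/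
def AtLeastOrbits (g : Cn n → Cn n) (M m : ℕ) (B : Set (Cn n)) : Prop :=
  ∃ p : Fin m → Cn n,
    (∀ i, ExactPeriodicPt g M (p i) ∧ ∀ j < M, g^[j] (p i) ∈ B) ∧
    ∀ i j : Fin m, i ≠ j → ∀ l < M, g^[l] (p i) ≠ p j

/-- `g` has exactly `m` distinct periodic orbits of period `M` inside `B`. -/
def ExactlyOrbits (g : Cn n → Cn n) (M m : ℕ) (B : Set (Cn n)) : Prop :=
  AtLeastOrbits g M m B ∧ ¬ AtLeastOrbits g M (m + 1) B

/-- The number `𝒪_M(f,0)` of periodic orbits of period `M` of `f` hidden at the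
fixed point `0`: the largest `m` such that there is a ball `B` centered at `0` in which
`0` is the only fixed point of `f^M`, and a sequence of holomorphic maps fixing `0`
converging to `f` uniformly on `B`, each having `m` distinct periodic orbits of
period `M` in `B`. -/
def hiddenOrbits (f : Cn n → Cn n) (M : ℕ) : ℕ :=
  sSup {m | ∃ r > 0,
    (∀ x ∈ closedBall (0 : Cn n) r, f^[M] x = x → x = 0) ∧
    ∃ fk : ℕ → Cn n → Cn n,
      (∀ k, AnalyticOnNhd ℂ (fk k) (ball (0 : Cn n) r) ∧ fk k 0 = 0) ∧
      TendstoUniformlyOn fk f atTop (ball (0 : Cn n) r) ∧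
      ∀ k, AtLeastOrbits (fk k) M m (ball (0 : Cn n) r)}

/-- `0` is an isolated fixed point of `g`. -/
def IsolatedFixedPtAt0 (g : Cn n → Cn n) : Prop :=
  g 0 = 0 ∧ ∀ᶠ x in 𝓝[≠] (0 : Cn n), g x ≠ x

/-- `0` is an isolated zero of `h`. -/
def IsolatedZeroAt0 (h : Cn n → Cn n) : Prop :=
  h 0 = 0 ∧ ∀ᶠ x in 𝓝[≠] (0 : Cn n), h x ≠ 0

/-- `p` is a simple fixed point of `g`: `Dg(p)` has no eigenvalue `1`. -/
def SimpleFixedPt (g : Cn n → Cn n) (p : Cn n) : Prop :=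
  g p = p ∧ ¬ Module.End.HasEigenvalue ((fderiv ℂ g p).toLinearMap) 1

/-- The global fixed point index `L(g)` of `g` over `U`: the sum of the fixed point
indices at all fixed points of `g` in `U`. -/
def globalIndex (g : Cn n → Cn n) (U : Set (Cn n)) : ℤ :=
  ∑ᶠ p ∈ {x ∈ U | g x = x}, (fixedPointIndex g p : ℤ)

/-- The global Dold index `P_M(f)` over `U`. -/
def globalDold (f : Cn n → Cn n) (M : ℕ) (U : Set (Cn n)) : ℤ :=
  ∑ τ ∈ M.primeFactors.powerset,
    (-1 : ℤ) ^ τ.card * globalIndex (f^[M / (∏ p ∈ τ, p)]) U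

private lemma iter_eq (L : Cn 2 →ₗ[ℂ] Cn 2) (j : ℕ) (x : Cn 2) :
    (⇑L)^[j] x = (L ^ j) x := (Module.End.pow_apply L j x).symm

private lemma eigen_pow {L : Cn 2 →ₗ[ℂ] Cn 2} {c : ℂ} {v : Cn 2} (h : L v = c • v) (k : ℕ) :
    (L ^ k) v = c ^ k • v := by
  induction k with
  | zero => simp
  | succ n ih =>
      rw [pow_succ', Module.End.mul_apply, ih, map_smul, h, smul_smul, ← pow_succ]

private lemma isPrimitiveRoot_of (c : ℂ) (M : ℕ) (hM : 0 < M) (h1 : c ^ M = 1)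
    (h2 : ∀ j, 0 < j → j < M → c ^ j ≠ 1) : IsPrimitiveRoot c M := by
  refine ⟨h1, fun l hl => ?_⟩
  have hr : c ^ (l % M) = 1 := by
    conv_lhs at hl => rw [← Nat.div_add_mod l M]
    rwa [pow_add, pow_mul, h1, one_pow, one_mul] at hl
  rcases Nat.eq_zero_or_pos (l % M) with h0 | hpos
  · exact Nat.dvd_of_mod_eq_zero h0
  · exact absurd hr (h2 _ hpos (Nat.mod_lt _ hM))

private lemma exactPeriodic_of_eigen {L : Cn 2 →ₗ[ℂ] Cn 2} {lam : ℂ} {v : Cn 2}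
    (hv : v ≠ 0) (h : L v = lam • v) {M : ℕ} (hp : IsPrimitiveRoot lam M) (hM : 0 < M) :
    (⇑L)^[M] v = v ∧ ∀ j, 0 < j → j < M → (⇑L)^[j] v ≠ v := by
  constructor
  · rw [iter_eq, eigen_pow h, hp.pow_eq_one, one_smul]
  · intro j hj hjM heq
    rw [iter_eq, eigen_pow h] at heq
    have h1 : lam ^ j = 1 := by
      have h0 : (lam ^ j - 1) • v = 0 := by rw [sub_smul, heq, one_smul, sub_self]
      rcases smul_eq_zero.mp h0 with h | h
      · exact sub_eq_zero.mp h
      · exact absurd h hv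
    exact absurd (Nat.le_of_dvd hj (hp.dvd_of_pow_eq_one j h1)) (not_le.mpr hjM)

private lemma charpoly_factors (L : Cn 2 →ₗ[ℂ] Cn 2) :
    ∃ a b : ℂ, LinearMap.charpoly L = (X - C a) * (X - C b) := by
  have hmonic := LinearMap.charpoly_monic L
  have hdeg : (LinearMap.charpoly L).natDegree = 2 := by
    rw [LinearMap.charpoly_natDegree, Module.finrank_fin_fun]
  have hsplits : (LinearMap.charpoly L).Splits := IsAlgClosed.splits _
  have hprod := hsplits.eq_prod_roots_of_monic hmonic
  have hcard : (LinearMap.charpoly L).roots.card = 2 := by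
    rw [(Polynomial.splits_iff_card_roots).mp hsplits, hdeg]
  obtain ⟨a, b, hab⟩ := Multiset.card_eq_two.mp hcard
  exact ⟨a, b, by rw [hprod, hab]; simp⟩

private lemma cayley {L : Cn 2 →ₗ[ℂ] Cn 2} {a b : ℂ}
    (hab : LinearMap.charpoly L = (X - C a) * (X - C b)) :
    (L - a • 1) * (L - b • 1) = 0 := by
  have h := LinearMap.aeval_self_charpoly L
  rw [hab, map_mul, map_sub, map_sub, aeval_X, aeval_C, aeval_C] at h
  simpa [Module.algebraMap_end_eq_smul_id, Module.End.one_eq_id] using h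

private lemma exists_eigenvector {L : Cn 2 →ₗ[ℂ] Cn 2} {a b : ℂ}
    (hab : LinearMap.charpoly L = (X - C a) * (X - C b))
    (hnb : ∃ v : Cn 2, L v ≠ b • v) : ∃ w : Cn 2, w ≠ 0 ∧ L w = a • w := by
  obtain ⟨v, hv⟩ := hnb
  have h0 := cayley hab
  refine ⟨L v - b • v, sub_ne_zero.mpr hv, ?_⟩
  have : ((L - a • 1) * (L - b • 1)) v = 0 := by rw [h0]; rfl
  rw [Module.End.mul_apply] at this
  simp only [LinearMap.sub_apply, LinearMap.smul_apply, Module.End.one_apply] at this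
  exact sub_eq_zero.mp this

private lemma charpoly_scalar (c : ℂ) (L : Cn 2 →ₗ[ℂ] Cn 2) (h : ∀ v, L v = c • v) :
    LinearMap.charpoly L = (X - C c) ^ 2 := by
  have hL : L = c • LinearMap.id := by
    apply LinearMap.ext; intro v
    rw [h]; simp
  let b : Module.Basis (Fin 2) ℂ (Cn 2) := Pi.basisFun ℂ (Fin 2)
  rw [← LinearMap.charpoly_toMatrix L b]
  have hm : LinearMap.toMatrix b b L = c • (1 : Matrix (Fin 2) (Fin 2) ℂ) := by
    rw [hL, map_smul, LinearMap.toMatrix_id]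
  rw [hm, Matrix.charpoly, Matrix.det_fin_two]
  simp [Matrix.charmatrix_apply_eq, Matrix.charmatrix_apply_ne, Matrix.one_apply, sq]

/-- A linear map `L : ℂ² → ℂ²` has a periodic point of exact period `M > 1` iff either
one eigenvalue of `L` is a primitive `M`-th root of unity, or the two eigenvalues of `L`
are primitive `m₁`-th and `m₂`-th roots of unity with `lcm(m₁, m₂) = M`. -/
theorem linear_map_periodic_point_iff_dim_two (M : ℕ) (hM : 1 < M)
    (L : Cn 2 →ₗ[ℂ] Cn 2) :
    (∃ x : Cn 2, ExactPeriodicPt (⇑L) M x) ↔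
      ((∃ lam : ℂ, Module.End.HasEigenvalue L lam ∧ IsPrimitiveRoot lam M) ∨
        ∃ (m₁ m₂ : ℕ) (l₁ l₂ : ℂ),
          LinearMap.charpoly L = (X - C l₁) * (X - C l₂) ∧
          IsPrimitiveRoot l₁ m₁ ∧ IsPrimitiveRoot l₂ m₂ ∧ Nat.lcm m₁ m₂ = M) := by
  have hM0 : 0 < M := by omega
  constructor
  · rintro ⟨x, hx⟩
    have hx0 : x ≠ 0 := by
      rintro rfl
      exact hx.2 1 one_pos hM (by simp)
    have hxM : (L ^ M) x = x := by rw [← iter_eq]; exact hx.1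
    by_cases hsp : ∃ c : ℂ, L x = c • x
    · obtain ⟨c, hc⟩ := hsp
      left
      refine ⟨c, Module.End.hasEigenvalue_of_hasEigenvector
        ⟨Module.End.mem_eigenspace_iff.mpr hc, hx0⟩, ?_⟩
      refine isPrimitiveRoot_of c M hM0 ?_ ?_
      · have h := hxM
        rw [eigen_pow hc] at h
        have h0 : (c ^ M - 1) • x = 0 := by rw [sub_smul, h, one_smul, sub_self]
        rcases smul_eq_zero.mp h0 with h' | h'
        · exact sub_eq_zero.mp h'
        · exact absurd h' hx0
      · intro j hj hjM hone
        refine hx.2 j hj hjM ?_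
        rw [iter_eq, eigen_pow hc, hone, one_smul]
    · push_neg at hsp
      -- x, L x linearly independent and span everything
      have hind : LinearIndependent ℂ ![x, L x] := by
        rw [LinearIndependent.pair_iff]
        intro s t hst
        rcases eq_or_ne t 0 with rfl | ht
        · rw [zero_smul, add_zero] at hst
          rcases smul_eq_zero.mp hst with h | h
          · exact ⟨h, rfl⟩
          · exact absurd h hx0
        · exfalso
          have h5 := congrArg (t⁻¹ • ·) hst
          simp only [smul_add, smul_smul, smul_zero, inv_mul_cancel₀ ht, one_smul] at h5
          apply hsp (-(t⁻¹ * s))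
          rw [add_comm] at h5
          rw [neg_smul]
          exact eq_neg_of_add_eq_zero_left h5
      have hspan : Submodule.span ℂ {x, L x} = ⊤ := by
        have h := hind.span_eq_top_of_card_eq_finrank
          (by simp [Module.finrank_fin_fun])
        rwa [show Set.range ![x, L x] = {x, L x} by
          ext y; simp [Matrix.range_cons, Matrix.range_empty, or_comm]] at h
      have hLM : ∀ v, (L ^ M) v = v := by
        intro v
        have hv : v ∈ Submodule.span ℂ ({x, L x} : Set (Cn 2)) := by
          rw [hspan]; trivial
        obtain ⟨s, t, hst⟩ := Submodule.mem_span_pair.mp hv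
        have h2 : (L ^ M) (L x) = L x := by
          have : (L ^ M) (L x) = L ((L ^ M) x) := by
            rw [← Module.End.mul_apply, ← Module.End.mul_apply, ← pow_succ, ← pow_succ']
          rw [this, hxM]
        rw [← hst, map_add, map_smul, map_smul, hxM, h2]
      obtain ⟨l₁, l₂, hchar⟩ := charpoly_factors L
      by_cases hll : l₁ = l₂
      · -- nilpotent case: contradiction
        exfalso
        subst hll
        set S := L - l₁ • 1 with hS
        have hS2 : S * S = 0 := by rw [hS]; exact cayley hchar
        have hLeq : L = l₁ • 1 + S := by rw [hS]; abel
        have hbin : ∀ k : ℕ, L ^ (k + 1) =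
            l₁ ^ (k + 1) • (1 : Module.End ℂ (Cn 2)) + (((k : ℂ) + 1) * l₁ ^ k) • S := by
          intro k
          induction k with
          | zero => simpa using hLeq
          | succ n ih =>
            rw [pow_succ, ih, hLeq]
            simp only [mul_add, add_mul, smul_mul_assoc, mul_smul_comm, one_mul, mul_one,
              hS2, smul_zero, add_zero, smul_smul]
            match_scalars <;> push_cast <;> ring
        have hLM1 : L ^ M = 1 := LinearMap.ext fun v => hLM v
        obtain ⟨m, rfl⟩ : ∃ m, M = m + 1 := ⟨M - 1, by omega⟩
        have hE : l₁ ^ (m + 1) • (1 : Module.End ℂ (Cn 2)) + (((m : ℂ) + 1) * l₁ ^ m) • S = 1 := by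
          rw [← hbin, hLM1]
        have hSc : (1 - l₁ ^ (m + 1)) • S = 0 := by
          have : S * (l₁ ^ (m + 1) • (1 : Module.End ℂ (Cn 2)) +
              (((m : ℂ) + 1) * l₁ ^ m) • S) = S := by rw [hE, mul_one]
          rw [mul_add, mul_smul_comm, mul_smul_comm, mul_one, hS2, smul_zero, add_zero] at this
          linear_combination (norm := module) -this
        have hS0 : S = 0 := by
          rcases smul_eq_zero.mp hSc with h | h
          · have hl1 : l₁ ^ (m + 1) = 1 := (sub_eq_zero.mp h).symm
            have hl1ne : l₁ ≠ 0 := by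
              intro h0; rw [h0, zero_pow (by omega)] at hl1; exact zero_ne_one hl1
            have hd : (((m : ℂ) + 1) * l₁ ^ m) ≠ 0 := by
              apply mul_ne_zero
              · exact Nat.cast_add_one_ne_zero m
              · exact pow_ne_zero _ hl1ne
            have : (((m : ℂ) + 1) * l₁ ^ m) • S = 0 := by
              have hE' := hE
              rw [hl1, one_smul] at hE'
              exact add_eq_left.mp (by rw [add_comm] at hE' ⊢; rw [hE'])
            rcases smul_eq_zero.mp this with h' | h'
            · exact absurd h' hd
            · exact h'
          · exact h
        apply hsp l₁
        have : L = l₁ • 1 := by rw [hLeq, hS0, add_zero]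
        rw [this]; simp
      · -- distinct eigenvalues
        have hv₁ : ∃ w : Cn 2, w ≠ 0 ∧ L w = l₁ • w := by
          refine exists_eigenvector hchar ⟨x, ?_⟩
          intro h; exact hsp l₂ h
        have hv₂ : ∃ w : Cn 2, w ≠ 0 ∧ L w = l₂ • w := by
          refine exists_eigenvector (by rw [hchar, mul_comm]) ⟨x, ?_⟩
          intro h; exact hsp l₁ h
        obtain ⟨v₁, hv₁0, hv₁e⟩ := hv₁
        obtain ⟨v₂, hv₂0, hv₂e⟩ := hv₂
        have hpow1 : l₁ ^ M = 1 := by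
          have := hLM v₁
          rw [eigen_pow hv₁e] at this
          have h0 : (l₁ ^ M - 1) • v₁ = 0 := by rw [sub_smul, this, one_smul, sub_self]
          rcases smul_eq_zero.mp h0 with h | h
          · exact sub_eq_zero.mp h
          · exact absurd h hv₁0
        have hpow2 : l₂ ^ M = 1 := by
          have := hLM v₂
          rw [eigen_pow hv₂e] at this
          have h0 : (l₂ ^ M - 1) • v₂ = 0 := by rw [sub_smul, this, one_smul, sub_self]
          rcases smul_eq_zero.mp h0 with h | h
          · exact sub_eq_zero.mp h
          · exact absurd h hv₂0
        have hfin1 : IsOfFinOrder l₁ := isOfFinOrder_iff_pow_eq_one.mpr ⟨M, hM0, hpow1⟩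
        have hfin2 : IsOfFinOrder l₂ := isOfFinOrder_iff_pow_eq_one.mpr ⟨M, hM0, hpow2⟩
        set m₁ := orderOf l₁ with hm₁def
        set m₂ := orderOf l₂ with hm₂def
        have hm₁ : 0 < m₁ := hfin1.orderOf_pos
        have hm₂ : 0 < m₂ := hfin2.orderOf_pos
        have hprim₁ : IsPrimitiveRoot l₁ m₁ := IsPrimitiveRoot.orderOf l₁
        have hprim₂ : IsPrimitiveRoot l₂ m₂ := IsPrimitiveRoot.orderOf l₂
        set N := Nat.lcm m₁ m₂ with hNdef
        have hNM : N ∣ M :=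
          Nat.lcm_dvd (orderOf_dvd_of_pow_eq_one hpow1) (orderOf_dvd_of_pow_eq_one hpow2)
        have hN0 : 0 < N := Nat.lcm_pos hm₁ hm₂
        -- v₁, v₂ span
        have hind12 : LinearIndependent ℂ ![v₁, v₂] := by
          rw [LinearIndependent.pair_iff]
          intro s t hst
          have happ := congrArg L hst
          rw [map_add, map_smul, map_smul, hv₁e, hv₂e, map_zero] at happ
          have h3 : (t * (l₂ - l₁)) • v₂ = 0 := by
            linear_combination (norm := module) happ - l₁ • hst
          have ht : t = 0 := by
            rcases smul_eq_zero.mp h3 with h | h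
            · rcases mul_eq_zero.mp h with h' | h'
              · exact h'
              · exact absurd (sub_eq_zero.mp h') (Ne.symm hll)
            · exact absurd h hv₂0
          subst ht
          rw [zero_smul, add_zero] at hst
          rcases smul_eq_zero.mp hst with h | h
          · exact ⟨h, rfl⟩
          · exact absurd h hv₁0
        have hspan12 : Submodule.span ℂ {v₁, v₂} = ⊤ := by
          have h := hind12.span_eq_top_of_card_eq_finrank
            (by simp [Module.finrank_fin_fun])
          rwa [show Set.range ![v₁, v₂] = {v₁, v₂} by
            ext y; simp [Matrix.range_cons, Matrix.range_empty, or_comm]] at h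
        obtain ⟨a, b, hab⟩ := Submodule.mem_span_pair.mp
          (by rw [hspan12]; trivial : x ∈ Submodule.span ℂ ({v₁, v₂} : Set (Cn 2)))
        have hLNx : (⇑L)^[N] x = x := by
          rw [iter_eq, ← hab, map_add, map_smul, map_smul, eigen_pow hv₁e, eigen_pow hv₂e,
            (hprim₁.pow_eq_one_iff_dvd N).mpr (Nat.dvd_lcm_left m₁ m₂),
            (hprim₂.pow_eq_one_iff_dvd N).mpr (Nat.dvd_lcm_right m₁ m₂), one_smul, one_smul]
        have hNeq : N = M := by
          by_contra hne
          exact hx.2 N hN0 (lt_of_le_of_ne (Nat.le_of_dvd hM0 hNM) hne) hLNx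
        exact Or.inr ⟨m₁, m₂, l₁, l₂, hchar, hprim₁, hprim₂, hNeq⟩
  · rintro (⟨lam, heig, hprim⟩ | ⟨m₁, m₂, l₁, l₂, hchar, hp₁, hp₂, hlcm⟩)
    · obtain ⟨v, hv⟩ := heig.exists_hasEigenvector
      exact ⟨v, exactPeriodic_of_eigen hv.2 (Module.End.mem_eigenspace_iff.mp hv.1) hprim hM0⟩
    · by_cases hll : l₁ = l₂
      · subst hll
        have hmm : m₁ = m₂ := hp₁.unique hp₂
        subst hmm
        rw [Nat.lcm_self] at hlcm
        subst hlcm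
        have hv : ∃ w : Cn 2, w ≠ 0 ∧ L w = l₁ • w := by
          by_cases hs : ∀ v : Cn 2, L v = l₁ • v
          · obtain ⟨v, hv⟩ := exists_ne (0 : Cn 2)
            exact ⟨v, hv, hs v⟩
          · push_neg at hs
            exact exists_eigenvector hchar hs
        obtain ⟨w, hw0, hwe⟩ := hv
        exact ⟨w, exactPeriodic_of_eigen hw0 hwe hp₁ hM0⟩
      · have hv₁ : ∃ w : Cn 2, w ≠ 0 ∧ L w = l₁ • w := by
          refine exists_eigenvector hchar ?_
          by_contra h
          push_neg at h
          have hscal := charpoly_scalar l₂ L h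
          rw [hchar] at hscal
          have heval := congrArg (Polynomial.eval l₁) hscal
          simp only [eval_mul, eval_pow, eval_sub, eval_X, eval_C, sub_self, zero_mul] at heval
          exact hll (sub_eq_zero.mp ((pow_eq_zero_iff (by norm_num : (2:ℕ) ≠ 0)).mp heval.symm))
        have hv₂ : ∃ w : Cn 2, w ≠ 0 ∧ L w = l₂ • w := by
          refine exists_eigenvector (by rw [hchar, mul_comm]) ?_
          by_contra h
          push_neg at h
          have hscal := charpoly_scalar l₁ L h
          rw [hchar] at hscal
          have heval := congrArg (Polynomial.eval l₂) hscal
          simp only [eval_mul, eval_pow, eval_sub, eval_X, eval_C, sub_self, mul_zero] at heval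
          exact hll (sub_eq_zero.mp ((pow_eq_zero_iff (by norm_num : (2:ℕ) ≠ 0)).mp heval.symm)).symm
        obtain ⟨v₁, hv₁0, hv₁e⟩ := hv₁
        obtain ⟨v₂, hv₂0, hv₂e⟩ := hv₂
        refine ⟨v₁ + v₂, ?_, ?_⟩
        · rw [iter_eq, map_add, eigen_pow hv₁e, eigen_pow hv₂e,
            (hp₁.pow_eq_one_iff_dvd M).mpr (hlcm ▸ Nat.dvd_lcm_left m₁ m₂),
            (hp₂.pow_eq_one_iff_dvd M).mpr (hlcm ▸ Nat.dvd_lcm_right m₁ m₂), one_smul, one_smul]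
        · intro j hj hjM heq
          rw [iter_eq, map_add, eigen_pow hv₁e, eigen_pow hv₂e] at heq
          have key : (l₁ ^ j - 1) • v₁ = (1 - l₂ ^ j) • v₂ := by
            linear_combination (norm := module) heq
          by_cases h1 : l₁ ^ j = 1
          · by_cases h2 : l₂ ^ j = 1
            · have hdvd : M ∣ j := hlcm ▸ Nat.lcm_dvd
                (hp₁.dvd_of_pow_eq_one j h1) (hp₂.dvd_of_pow_eq_one j h2)
              exact absurd (Nat.le_of_dvd hj hdvd) (not_le.mpr hjM)
            · have : (1 - l₂ ^ j) • v₂ = 0 := by rw [← key, h1, sub_self, zero_smul]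
              rcases smul_eq_zero.mp this with h | h
              · exact h2 (sub_eq_zero.mp h).symm
              · exact absurd h hv₂0
          · have hw0 : (l₁ ^ j - 1) • v₁ ≠ 0 :=
              smul_ne_zero (sub_ne_zero.mpr h1) hv₁0
            have hwe1 : L ((l₁ ^ j - 1) • v₁) = l₁ • ((l₁ ^ j - 1) • v₁) := by
              rw [map_smul, hv₁e]; exact smul_comm _ _ _
            have hwe2 : L ((l₁ ^ j - 1) • v₁) = l₂ • ((l₁ ^ j - 1) • v₁) := by
              rw [key, map_smul, hv₂e]; exact smul_comm _ _ _
            have hzero : (l₁ - l₂) • ((l₁ ^ j - 1) • v₁) = 0 := by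
              rw [sub_smul, ← hwe1, ← hwe2, sub_self]
            rcases smul_eq_zero.mp hzero with h | h
            · exact hll (sub_eq_zero.mp h)
            · exact hw0 h

end ZhangPaper
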